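/- arXiv:2303.01336 — 4 statements merged into one kernel-verified Lean document; each statement's English description precedes it below -/
import Mathlib

section
/- Let (X, ω) be a measure space, p ∈ (0, 1], and f ∈ L^{p,∞}(X, ω). Then ‖f‖_{L^{p,∞}(X,ω)} is comparable, up to a constant depending only on p, to sup_{A} inf_{B} ω(A)^{1/p - 1} · ‖f·1_B‖_{L^1(X,ω)}, where the supremum is over measurable A with 0 < ω(A) < ∞ and the infimum is over measurable B ⊆ A with ω(B) ≥ ω(A)/2. -/
open MeasureTheory ENNReal Set Filter

variable {X : Type*} [MeasurableSpace X]

/-- A σ-finite setting: a σ-finite measure `ω` and a σ-finite outer measure `μ`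
such that `μ`-null sets are `ω`-null. -/
structure SigmaFiniteSetting (μ : MeasureTheory.OuterMeasure X)
    (ω : MeasureTheory.Measure X) : Prop where
  omega_sf : SigmaFinite ω
  mu_sf : ∃ B : ℕ → Set X, (⋃ n, B n) = Set.univ ∧ ∀ n, μ (B n) ≠ ∞
  ac : ∀ A : Set X, μ A = 0 → ω A = 0

/-- The generating collection `Σ_μ` of measurable sets with `μ(A) ∉ {0,∞}`. -/
def goodSets (μ : MeasureTheory.OuterMeasure X) : Set (Set X) :=
  {A | MeasurableSet A ∧ μ A ≠ 0 ∧ μ A ≠ ∞}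

/-- The size `ℓ^r_ω(f)(A) = μ(A)^{-1/r} ‖f 1_A‖_{L^r(ω)}`. -/
noncomputable def ellr (μ : MeasureTheory.OuterMeasure X) (ω : MeasureTheory.Measure X)
    (r : ℝ) (f : X → ℝ≥0∞) (A : Set X) : ℝ≥0∞ :=
  μ A ^ (-(1/r)) * (∫⁻ x in A, f x ^ r ∂ω) ^ (1/r)

/-- The size `ℓ^∞_ω(f)(A) = ‖f 1_A‖_{L^∞(ω)}`. -/
noncomputable def ellInfty (ω : MeasureTheory.Measure X) (f : X → ℝ≥0∞) (A : Set X) : ℝ≥0∞ :=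
  essSup (A.indicator f) ω

/-- `ℓ^r_ω` for `r ∈ (0,∞]`. -/
noncomputable def ellre (μ : MeasureTheory.OuterMeasure X) (ω : MeasureTheory.Measure X)
    (r : ℝ≥0∞) : (X → ℝ≥0∞) → Set X → ℝ≥0∞ :=
  if r = ∞ then ellInfty ω else ellr μ ω r.toReal

/-- The outer `L^∞_μ(S)` quasi-norm: `sup_{A ∈ 𝒜} S(f)(A)`. -/
noncomputable def outLinf (𝒜 : Set (Set X))
    (S : (X → ℝ≥0∞) → Set X → ℝ≥0∞) (f : X → ℝ≥0∞) : ℝ≥0∞ :=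
  ⨆ A ∈ 𝒜, S f A

/-- The super level measure `μ(S(f) > l)`. -/
noncomputable def slm (μ : MeasureTheory.OuterMeasure X) (𝒜 : Set (Set X))
    (S : (X → ℝ≥0∞) → Set X → ℝ≥0∞) (f : X → ℝ≥0∞) (l : ℝ≥0∞) : ℝ≥0∞ :=
  ⨅ (E : Set X) (_ : MeasurableSet E) (_ : outLinf 𝒜 S (Eᶜ.indicator f) ≤ l), μ E

/-- The outer `L^{p,∞}_μ(S)` quasi-norm (weak type), `p ∈ (0,∞)` real. -/
noncomputable def outWeak (μ : MeasureTheory.OuterMeasure X) (𝒜 : Set (Set X))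
    (S : (X → ℝ≥0∞) → Set X → ℝ≥0∞) (p : ℝ) (f : X → ℝ≥0∞) : ℝ≥0∞ :=
  ⨆ (l : ℝ≥0∞) (_ : 0 < l), l * (slm μ 𝒜 S f l) ^ (1/p)

/-- The outer Lorentz `L^{p,q}_μ(S)` quasi-norm, `p, q ∈ (0,∞)` real. -/
noncomputable def outLorentz (μ : MeasureTheory.OuterMeasure X) (𝒜 : Set (Set X))
    (S : (X → ℝ≥0∞) → Set X → ℝ≥0∞) (p q : ℝ) (f : X → ℝ≥0∞) : ℝ≥0∞ :=
  ENNReal.ofReal p ^ (1/q) *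
    (∫⁻ t in Set.Ioi (0:ℝ),
      (ENNReal.ofReal t * (slm μ 𝒜 S f (ENNReal.ofReal t)) ^ (1/p)) ^ q *
        (ENNReal.ofReal t)⁻¹) ^ (1/q)

/-- The outer Lorentz `L^{p,q}_μ(S)` quasi-norm for `p, q ∈ (0,∞]`. -/
noncomputable def outLpq (μ : MeasureTheory.OuterMeasure X) (𝒜 : Set (Set X))
    (S : (X → ℝ≥0∞) → Set X → ℝ≥0∞) (p q : ℝ≥0∞) (f : X → ℝ≥0∞) : ℝ≥0∞ :=
  if p = ∞ then outLinf 𝒜 S f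
  else if q = ∞ then outWeak μ 𝒜 S p.toReal f
  else outLorentz μ 𝒜 S p.toReal q.toReal f

/-- The size `S_r(f)(A) = (S(|f|^r)(A))^{1/r}` for `r ∈ (0,∞)`. -/
noncomputable def sizeR (S : (X → ℝ≥0∞) → Set X → ℝ≥0∞) (r : ℝ)
    (f : X → ℝ≥0∞) (A : Set X) : ℝ≥0∞ :=
  (S (fun x => f x ^ r) A) ^ (1/r)

/-- `S_r` for `r ∈ (0,∞]`; for `r = ∞` defined via the limit (as a limsup). -/
noncomputable def sizeRE (S : (X → ℝ≥0∞) → Set X → ℝ≥0∞) (r : ℝ≥0∞)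
    (f : X → ℝ≥0∞) (A : Set X) : ℝ≥0∞ :=
  if r = ∞ then Filter.limsup (fun s : ℝ => sizeR S s f A) Filter.atTop
  else sizeR S r.toReal f A


lemma aux_lower {X : Type} [MeasurableSpace X] (ω : Measure X) (F : X → ℝ≥0∞)
    (hF : Measurable F) (p : ℝ) (hp0 : 0 < p)
    (hW : (⨆ (l : ℝ≥0∞) (_ : 0 < l), l * ω {x | l < F x} ^ (1/p)) ≠ ∞) :
    (⨆ (l : ℝ≥0∞) (_ : 0 < l), l * ω {x | l < F x} ^ (1/p)) ≤
      2 * ⨆ (A : Set X) (_ : MeasurableSet A) (_ : ω A ≠ 0) (_ : ω A ≠ ∞),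
        ⨅ (B : Set X) (_ : MeasurableSet B) (_ : B ⊆ A) (_ : ω A / 2 ≤ ω B),
          ω A ^ (1/p - 1) * ∫⁻ x in B, F x ∂ω := by
  have hp : (0:ℝ) < 1/p := by positivity
  refine iSup₂_le fun l hl => ?_
  set E : Set X := {x | l < F x} with hE
  rcases eq_or_ne (ω E) 0 with h0 | h0
  · rw [h0, ENNReal.zero_rpow_of_pos hp, mul_zero]; exact zero_le
  have hlt : l ≠ ∞ := by
    rintro rfl
    apply h0
    convert measure_empty (μ := ω)
    ext x; simp [hE, (lt_irrefl _ <| lt_of_le_of_lt le_top ·)]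
  have hterm : l * ω E ^ (1/p) ≤ ⨆ (l : ℝ≥0∞) (_ : 0 < l), l * ω {x | l < F x} ^ (1/p) :=
    le_iSup₂ (f := fun l (_ : 0 < l) => l * ω {x | l < F x} ^ (1/p)) l hl
  have hEt : ω E ≠ ∞ := by
    rintro habs
    apply hW
    rw [habs] at hterm
    rw [eq_top_iff]
    refine le_trans ?_ hterm
    rw [ENNReal.top_rpow_of_pos hp, ENNReal.mul_top hl.ne']
  -- now the main bound
  have key : l * ω E ^ (1/p) / 2 ≤
      ⨅ (B : Set X) (_ : MeasurableSet B) (_ : B ⊆ E) (_ : ω E / 2 ≤ ω B),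
        ω E ^ (1/p - 1) * ∫⁻ x in B, F x ∂ω := by
    refine le_iInf fun B => le_iInf fun hB => le_iInf fun hBE => le_iInf fun hB2 => ?_
    have h1 : l * (ω E / 2) ≤ ∫⁻ x in B, F x ∂ω := by
      calc l * (ω E / 2) ≤ l * ω B := by gcongr
        _ = ∫⁻ _ in B, l ∂ω := by rw [setLIntegral_const, mul_comm]
        _ ≤ ∫⁻ x in B, F x ∂ω := setLIntegral_mono hF fun x hx => (hBE hx).le
    calc l * ω E ^ (1/p) / 2 = ω E ^ (1/p - 1) * (l * (ω E / 2)) := by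
          rw [show (1/p : ℝ) = (1/p - 1) + 1 by ring, ENNReal.rpow_add _ _ h0 hEt,
            ENNReal.rpow_one]
          rw [ENNReal.div_eq_inv_mul, ENNReal.div_eq_inv_mul]
          ring_nf
      _ ≤ ω E ^ (1/p - 1) * ∫⁻ x in B, F x ∂ω := by gcongr
  have hEmeas : MeasurableSet E := measurableSet_lt measurable_const hF
  have : l * ω E ^ (1/p) / 2 ≤
      ⨆ (A : Set X) (_ : MeasurableSet A) (_ : ω A ≠ 0) (_ : ω A ≠ ∞),
        ⨅ (B : Set X) (_ : MeasurableSet B) (_ : B ⊆ A) (_ : ω A / 2 ≤ ω B),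
          ω A ^ (1/p - 1) * ∫⁻ x in B, F x ∂ω := by
    refine le_trans key ?_
    exact le_iSup_of_le E <| le_iSup_of_le hEmeas <| le_iSup_of_le h0 <| le_iSup_of_le hEt le_rfl
  calc l * ω E ^ (1/p) = 2 * (l * ω E ^ (1/p) / 2) := by
        rw [ENNReal.mul_div_cancel' (by norm_num) (by norm_num)]
    _ ≤ _ := by gcongr


lemma aux_upper {X : Type} [MeasurableSpace X] (ω : Measure X) (f : X → ℝ)
    (hf : Measurable f) (p : ℝ) (hp0 : 0 < p) (hp1 : p ≤ 1)
    (hW : (⨆ (l : ℝ≥0∞) (_ : 0 < l), l * ω {x | l < (‖f x‖₊ : ℝ≥0∞)} ^ (1/p)) ≠ ∞) :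
    (⨆ (A : Set X) (_ : MeasurableSet A) (_ : ω A ≠ 0) (_ : ω A ≠ ∞),
        ⨅ (B : Set X) (_ : MeasurableSet B) (_ : B ⊆ A) (_ : ω A / 2 ≤ ω B),
          ω A ^ (1/p - 1) * ∫⁻ x in B, (‖f x‖₊ : ℝ≥0∞) ∂ω) ≤
      2 ^ ((2:ℝ)/p) * ⨆ (l : ℝ≥0∞) (_ : 0 < l), l * ω {x | l < (‖f x‖₊ : ℝ≥0∞)} ^ (1/p) := by
  have hp : (0:ℝ) < 1/p := by positivity
  set F : X → ℝ≥0∞ := fun x => (‖f x‖₊ : ℝ≥0∞) with hFdef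
  have hF : Measurable F := hf.nnnorm.coe_nnreal_ennreal
  set W : ℝ≥0∞ := ⨆ (l : ℝ≥0∞) (_ : 0 < l), l * ω {x | l < F x} ^ (1/p) with hWdef
  refine iSup_le fun A => iSup_le fun hA => iSup_le fun hA0 => iSup_le fun hAt => ?_
  rcases eq_or_ne W 0 with hW0 | hW0
  · -- W = 0 : f vanishes a.e., take B = A
    have hz : ∀ l : ℝ≥0∞, 0 < l → ω {x | l < F x} = 0 := by
      intro l hl
      have h1 : l * ω {x | l < F x} ^ (1/p) ≤ W :=
        le_iSup₂ (f := fun l (_ : 0 < l) => l * ω {x | l < F x} ^ (1/p)) l hl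
      rw [hW0, nonpos_iff_eq_zero, mul_eq_zero] at h1
      rcases h1 with h | h
      · exact absurd h hl.ne'
      · rwa [ENNReal.rpow_eq_zero_iff_of_pos hp] at h
    have hae : ∀ᵐ x ∂ω, F x = 0 := by
      rw [ae_iff]
      have hsub : {x | ¬ F x = 0} ⊆ ⋃ n : ℕ, {x | ((n : ℝ≥0∞))⁻¹ < F x} := by
        intro x hx
        obtain ⟨n, hn⟩ := ENNReal.exists_inv_nat_lt hx
        exact mem_iUnion.mpr ⟨n, hn⟩
      refine le_antisymm (le_trans (measure_mono hsub) ?_) (zero_le)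
      refine le_trans (measure_iUnion_le _) ?_
      simp only [hz _ (ENNReal.inv_pos.mpr (ENNReal.natCast_ne_top _)), tsum_zero, le_refl]
    have hint : ∫⁻ x in A, F x ∂ω = 0 := by
      refine le_antisymm (le_trans (setLIntegral_le_lintegral _ _) ?_) (zero_le)
      exact le_of_eq ((lintegral_eq_zero_iff hF).mpr hae)
    refine le_trans (iInf_le_of_le A <| iInf_le_of_le hA <| iInf_le_of_le Subset.rfl <|
      iInf_le_of_le (ENNReal.half_le_self) le_rfl) ?_
    rw [hint, mul_zero]
    exact zero_le
  · -- W ≠ 0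
    have hWt : W ≠ ∞ := hW
    have hWp0 : W ^ p ≠ 0 := by
      simp [ENNReal.rpow_eq_zero_iff, hW0, hWt, hp0, hp0.not_gt, not_lt.mpr hp0.le]
    have hWpt : W ^ p ≠ ∞ := ENNReal.rpow_ne_top_of_nonneg hp0.le hWt
    -- Chebyshev
    have cheb : ∀ t : ℝ≥0∞, t ≠ 0 → t ≠ ∞ → ω {x | t < F x} ≤ W ^ p * t ^ (-p) := by
      intro t ht0 htt
      have h1 : t * ω {x | t < F x} ^ (1/p) ≤ W :=
        le_iSup₂ (f := fun l (_ : 0 < l) => l * ω {x | l < F x} ^ (1/p)) t (pos_iff_ne_zero.mpr ht0)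
      have h2 : (t * ω {x | t < F x} ^ (1/p)) ^ p ≤ W ^ p := ENNReal.rpow_le_rpow h1 hp0.le
      rw [ENNReal.mul_rpow_of_nonneg _ _ hp0.le, ← ENNReal.rpow_mul,
        one_div_mul_cancel hp0.ne', ENNReal.rpow_one] at h2
      calc ω {x | t < F x} = t ^ (-p) * (t ^ p * ω {x | t < F x}) := by
            rw [← mul_assoc, ← ENNReal.rpow_add _ _ ht0 htt]
            simp
        _ ≤ t ^ (-p) * W ^ p := by gcongr
        _ = W ^ p * t ^ (-p) := mul_comm _ _
    -- the cutoff level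
    set lam : ℝ≥0∞ := (2 * W ^ p / ω A) ^ (1/p) with hlamdef
    have hq0 : 2 * W ^ p / ω A ≠ 0 := by
      simp [ENNReal.div_eq_zero_iff, hWp0, hAt]
    have hnumt : 2 * W ^ p ≠ ∞ := ENNReal.mul_ne_top (by norm_num) hWpt
    have hqt : 2 * W ^ p / ω A ≠ ∞ := by
      simp [ENNReal.div_eq_top, hnumt, hA0]
    have hlam0 : lam ≠ 0 := by
      simp [hlamdef, ENNReal.rpow_eq_zero_iff, hq0, hqt, hp, hp.not_gt, not_lt.mpr hp.le]
    have hlamt : lam ≠ ∞ := by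
      simp [hlamdef, ENNReal.rpow_eq_top_iff, hq0, hqt, hp, hp.not_gt, not_lt.mpr hp.le]
    have hlamp : lam ^ p = 2 * W ^ p / ω A := by
      rw [hlamdef, ← ENNReal.rpow_mul, one_div_mul_cancel hp0.ne', ENNReal.rpow_one]
    -- the good subset B
    set B : Set X := A ∩ {x | F x ≤ lam} with hBdef
    have hBm : MeasurableSet B := hA.inter (measurableSet_le hF measurable_const)
    have hBA : B ⊆ A := inter_subset_left
    have hsub : ω {x | lam < F x} ≤ ω A / 2 := by
      refine (cheb lam hlam0 hlamt).trans (le_of_eq ?_)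
      rw [ENNReal.rpow_neg, hlamp]
      rw [div_eq_mul_inv, ENNReal.mul_inv (Or.inr (ENNReal.inv_ne_top.mpr hA0))
        (Or.inr (ENNReal.inv_ne_zero.mpr hAt)), inv_inv,
        ENNReal.mul_inv (Or.inl (by norm_num)) (Or.inl (by norm_num))]
      calc W ^ p * ((2:ℝ≥0∞)⁻¹ * (W ^ p)⁻¹ * ω A)
          = (W ^ p * (W ^ p)⁻¹) * ((2:ℝ≥0∞)⁻¹ * ω A) := by ring
        _ = (2:ℝ≥0∞)⁻¹ * ω A := by rw [ENNReal.mul_inv_cancel hWp0 hWpt, one_mul]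
        _ = ω A / 2 := by rw [div_eq_mul_inv, mul_comm]
    have hB2 : ω A / 2 ≤ ω B := by
      have hcover : ω A ≤ ω B + ω A / 2 := by
        have hc : A ⊆ B ∪ {x | lam < F x} := by
          intro x hx
          by_cases h : F x ≤ lam
          · exact Or.inl ⟨hx, h⟩
          · exact Or.inr (not_le.mp h)
        refine le_trans (measure_mono hc) (le_trans (measure_union_le _ _) ?_)
        gcongr
      have h2 := tsub_le_iff_right.mpr hcover
      rwa [ENNReal.sub_half hAt] at h2
    -- layer cake setup
    set Λ : ℝ := lam.toReal with hLdef
    have hL0 : 0 < Λ := ENNReal.toReal_pos hlam0 hlamt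
    set r : ℝ := -(p/2) with hrdef
    have hr1 : (-1:ℝ) < r := by rw [hrdef]; linarith
    have hr2 : (0:ℝ) < r + 1 := by rw [hrdef]; linarith
    set s : ℝ := 1/p - 1/2 with hsdef
    have h1p : (1:ℝ) ≤ 1/p := one_le_one_div hp0 hp1
    have hs0 : (0:ℝ) ≤ s := by rw [hsdef]; linarith
    have hlayer : ∫⁻ x in B, F x ∂ω = ∫⁻ t in Ioi (0:ℝ), (ω.restrict B) {x | t < ‖f x‖} := by
      have h := lintegral_eq_lintegral_meas_lt (ω.restrict B)
        (ae_of_all _ fun x => norm_nonneg (f x)) hf.norm.aemeasurable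
      simp_rw [ofReal_norm, enorm_eq_nnnorm] at h
      exact h
    have hptwise : ∀ t ∈ Ioi (0:ℝ), (ω.restrict B) {x | t < ‖f x‖} ≤
        (Ioc (0:ℝ) Λ).indicator
          (fun t => ω A ^ ((1:ℝ)/2) * ((W ^ p) ^ ((1:ℝ)/2) * ENNReal.ofReal t ^ r)) t := by
      intro t ht
      have ht0 : (0:ℝ) < t := ht
      rw [Measure.restrict_apply (measurableSet_lt measurable_const hf.norm)]
      by_cases hcase : t ≤ Λ
      · rw [indicator_of_mem (mem_Ioc.mpr ⟨ht0, hcase⟩)]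
        have hm1 : ω ({x | t < ‖f x‖} ∩ B) ≤ ω A :=
          measure_mono (inter_subset_right.trans hBA)
        have hm2 : ω ({x | t < ‖f x‖} ∩ B) ≤ W ^ p * (ENNReal.ofReal t) ^ (-p) := by
          refine le_trans (measure_mono ?_) (cheb (ENNReal.ofReal t)
            (by simp [ENNReal.ofReal_eq_zero, not_le, ht0]) ENNReal.ofReal_ne_top)
          intro x hx
          have hlt : ENNReal.ofReal t < ENNReal.ofReal ‖f x‖ :=
            (ENNReal.ofReal_lt_ofReal_iff_of_nonneg (le_of_lt ht)).mpr hx.1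
          rwa [ofReal_norm, enorm_eq_nnnorm] at hlt
        calc ω ({x | t < ‖f x‖} ∩ B)
            = ω ({x | t < ‖f x‖} ∩ B) ^ ((1:ℝ)/2) * ω ({x | t < ‖f x‖} ∩ B) ^ ((1:ℝ)/2) := by
              rw [← ENNReal.rpow_add_of_nonneg _ _ (by norm_num) (by norm_num)]
              norm_num
          _ ≤ ω A ^ ((1:ℝ)/2) * (W ^ p * (ENNReal.ofReal t) ^ (-p)) ^ ((1:ℝ)/2) :=
              mul_le_mul' (ENNReal.rpow_le_rpow hm1 (by norm_num))
                (ENNReal.rpow_le_rpow hm2 (by norm_num))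
          _ = ω A ^ ((1:ℝ)/2) * ((W ^ p) ^ ((1:ℝ)/2) * ENNReal.ofReal t ^ r) := by
              rw [ENNReal.mul_rpow_of_nonneg _ _ (by norm_num : (0:ℝ) ≤ 1/2),
                ← ENNReal.rpow_mul (ENNReal.ofReal t),
                show -p * (1/2 : ℝ) = r from by rw [hrdef]; ring]
      · rw [indicator_of_notMem (fun hmem => hcase hmem.2), le_zero_iff]
        have hempty : {x | t < ‖f x‖} ∩ B = ∅ := by
          ext x
          simp only [mem_inter_iff, mem_empty_iff_false, iff_false, not_and]
          intro hx1 hx2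
          have hFx : ENNReal.ofReal ‖f x‖ ≤ lam := by
            rw [ofReal_norm, enorm_eq_nnnorm]; exact hx2.2
          have h2 := ENNReal.toReal_mono hlamt hFx
          rw [ENNReal.toReal_ofReal (norm_nonneg _)] at h2
          exact hcase (le_trans (le_of_lt hx1) h2)
        rw [hempty, measure_empty]
    have hmeas_r : Measurable fun t : ℝ => ENNReal.ofReal t ^ r :=
      (ENNReal.continuous_rpow_const.comp ENNReal.continuous_ofReal).measurable
    have hI1 := setLIntegral_mono' (μ := volume) measurableSet_Ioi hptwise
    have hI2 : ∫⁻ t in Ioi (0:ℝ), (Ioc (0:ℝ) Λ).indicator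
          (fun t => ω A ^ ((1:ℝ)/2) * ((W ^ p) ^ ((1:ℝ)/2) * ENNReal.ofReal t ^ r)) t
        = ∫⁻ t in Ioc (0:ℝ) Λ, ω A ^ ((1:ℝ)/2) * ((W ^ p) ^ ((1:ℝ)/2) * ENNReal.ofReal t ^ r) := by
      rw [lintegral_indicator measurableSet_Ioc, Measure.restrict_restrict measurableSet_Ioc,
        inter_eq_self_of_subset_left Ioc_subset_Ioi_self]
    have hI3 : ∫⁻ t in Ioc (0:ℝ) Λ, ω A ^ ((1:ℝ)/2) * ((W ^ p) ^ ((1:ℝ)/2) * ENNReal.ofReal t ^ r)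
        = ω A ^ ((1:ℝ)/2) * ((W ^ p) ^ ((1:ℝ)/2) * ∫⁻ t in Ioc (0:ℝ) Λ, ENNReal.ofReal t ^ r) := by
      rw [lintegral_const_mul _ (hmeas_r.const_mul _), lintegral_const_mul _ hmeas_r]
    have hJ : (∫⁻ t in Ioc (0:ℝ) Λ, ENNReal.ofReal t ^ r) ≤ 2 * lam ^ (r+1) := by
      have e1 : ∫⁻ t in Ioc (0:ℝ) Λ, ENNReal.ofReal t ^ r
          = ∫⁻ t in Ioc (0:ℝ) Λ, ENNReal.ofReal (t ^ r) := by
        refine setLIntegral_congr_fun measurableSet_Ioc (fun t ht => ?_)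
        rw [← ENNReal.ofReal_rpow_of_pos ht.1]
      have hint : IntegrableOn (fun t : ℝ => t ^ r) (Ioc 0 Λ) := by
        have h := intervalIntegral.intervalIntegrable_rpow' (a := 0) (b := Λ) hr1
        rwa [intervalIntegrable_iff, uIoc_of_le hL0.le] at h
      have e2 : ∫⁻ t in Ioc (0:ℝ) Λ, ENNReal.ofReal (t ^ r)
          = ENNReal.ofReal (∫ t in Ioc (0:ℝ) Λ, t ^ r) := by
        rw [MeasureTheory.ofReal_integral_eq_lintegral_ofReal hint
          ((ae_restrict_iff' measurableSet_Ioc).mpr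
            (ae_of_all _ fun t ht => Real.rpow_nonneg ht.1.le r))]
      have e3 : ∫ t in Ioc (0:ℝ) Λ, t ^ r = Λ ^ (r+1) / (r+1) := by
        rw [← intervalIntegral.integral_of_le hL0.le, integral_rpow (Or.inl hr1),
          Real.zero_rpow hr2.ne', sub_zero]
      have e4 : ENNReal.ofReal (Λ ^ (r+1) / (r+1)) ≤ ENNReal.ofReal (2 * Λ ^ (r+1)) := by
        apply ENNReal.ofReal_le_ofReal
        have hpow : (0:ℝ) ≤ Λ ^ (r+1) := Real.rpow_nonneg hL0.le _
        have hhalf : (1:ℝ)/2 ≤ r + 1 := by rw [hrdef]; linarith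
        have hinv : (r+1)⁻¹ ≤ (2:ℝ) := by
          rw [show (2:ℝ) = ((1:ℝ)/2)⁻¹ by norm_num]
          exact inv_anti₀ (by norm_num) hhalf
        calc Λ ^ (r+1) / (r+1) = Λ ^ (r+1) * (r+1)⁻¹ := div_eq_mul_inv _ _
          _ ≤ Λ ^ (r+1) * 2 := mul_le_mul_of_nonneg_left hinv hpow
          _ = 2 * Λ ^ (r+1) := mul_comm _ _
      have e5 : ENNReal.ofReal (2 * Λ ^ (r+1)) = 2 * lam ^ (r+1) := by
        rw [ENNReal.ofReal_mul (by norm_num), ENNReal.ofReal_ofNat,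
          ← ENNReal.ofReal_rpow_of_pos hL0, ENNReal.ofReal_toReal hlamt]
      rw [e1, e2, e3, ← e5]
      exact e4
    have hfinal : ω A ^ (1/p - 1) * (ω A ^ ((1:ℝ)/2) * ((W ^ p) ^ ((1:ℝ)/2) * (2 * lam ^ (r+1))))
        ≤ 2 ^ ((2:ℝ)/p) * W := by
      have hlr : lam ^ (r+1) = 2 ^ s * W ^ (p*s) * (ω A ^ s)⁻¹ := by
        rw [hlamdef, ← ENNReal.rpow_mul,
          show (1/p) * (r+1) = s from by rw [hrdef, hsdef]; field_simp; ring,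
          div_eq_mul_inv, ENNReal.mul_rpow_of_nonneg _ _ hs0,
          ENNReal.mul_rpow_of_nonneg _ _ hs0, ENNReal.inv_rpow, ← ENNReal.rpow_mul]
      have hwp : (W ^ p) ^ ((1:ℝ)/2) = W ^ (p * (1/2)) := (ENNReal.rpow_mul W p _).symm
      rw [hlr, hwp]
      have e1 : ω A ^ (1/p-1) * ω A ^ ((1:ℝ)/2) * (ω A ^ s)⁻¹ = 1 := by
        rw [← ENNReal.rpow_neg, ← ENNReal.rpow_add _ _ hA0 hAt, ← ENNReal.rpow_add _ _ hA0 hAt,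
          show 1/p-1+1/2+(-s) = (0:ℝ) from by rw [hsdef]; ring, ENNReal.rpow_zero]
      have e2 : W ^ (p*(1/2)) * W ^ (p*s) = W := by
        rw [← ENNReal.rpow_add _ _ hW0 hWt,
          show p*(1/2)+p*s = (1:ℝ) from by rw [hsdef]; field_simp; ring, ENNReal.rpow_one]
      have e3 : (2:ℝ≥0∞) * 2 ^ s ≤ 2 ^ ((2:ℝ)/p) := by
        calc (2:ℝ≥0∞) * 2 ^ s = 2 ^ (1+s : ℝ) := by
              rw [ENNReal.rpow_add_of_nonneg _ _ zero_le_one hs0, ENNReal.rpow_one]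
          _ ≤ 2 ^ ((2:ℝ)/p) := ENNReal.rpow_le_rpow_of_exponent_le one_le_two (by
              have h2 : (2:ℝ)/p = 2*(1/p) := by ring
              rw [hsdef, h2]; linarith)
      calc ω A ^ (1/p-1) * (ω A ^ ((1:ℝ)/2) * (W ^ (p*(1/2)) * (2 * (2^s * W^(p*s) * (ω A ^ s)⁻¹))))
          = (ω A ^ (1/p-1) * ω A ^ ((1:ℝ)/2) * (ω A ^ s)⁻¹) * (W ^ (p*(1/2)) * W ^ (p*s))
              * (2 * 2^s) := by ring
        _ = W * (2 * 2^s) := by rw [e1, e2, one_mul]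
        _ ≤ W * 2 ^ ((2:ℝ)/p) := mul_le_mul_right e3 W
        _ = 2 ^ ((2:ℝ)/p) * W := mul_comm _ _
    refine le_trans (iInf_le_of_le B <| iInf_le_of_le hBm <| iInf_le_of_le hBA <|
      iInf_le_of_le hB2 le_rfl) ?_
    refine le_trans ?_ hfinal
    refine mul_le_mul_right ?_ _
    rw [hlayer]
    refine le_trans hI1 ?_
    rw [hI2, hI3]
    exact mul_le_mul_right (mul_le_mul_right hJ _) _


/-- characterization of the classical weak `L^p` quasi-norm, `p ∈ (0,1]`. -/
theorem stmt1 (p : ℝ) (hp0 : 0 < p) (hp1 : p ≤ 1) :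
    ∃ C : ℝ≥0∞, 1 ≤ C ∧ C ≠ ∞ ∧
      ∀ (X : Type) [MeasurableSpace X] (ω : MeasureTheory.Measure X) (f : X → ℝ),
        Measurable f →
        (⨆ (l : ℝ≥0∞) (_ : 0 < l), l * ω {x | l < (‖f x‖₊ : ℝ≥0∞)} ^ (1/p)) ≠ ∞ →
        ((⨆ (l : ℝ≥0∞) (_ : 0 < l), l * ω {x | l < (‖f x‖₊ : ℝ≥0∞)} ^ (1/p)) ≤
            C * ⨆ (A : Set X) (_ : MeasurableSet A) (_ : ω A ≠ 0) (_ : ω A ≠ ∞),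
              ⨅ (B : Set X) (_ : MeasurableSet B) (_ : B ⊆ A) (_ : ω A / 2 ≤ ω B),
                ω A ^ (1/p - 1) * ∫⁻ x in B, (‖f x‖₊ : ℝ≥0∞) ∂ω) ∧
        ((⨆ (A : Set X) (_ : MeasurableSet A) (_ : ω A ≠ 0) (_ : ω A ≠ ∞),
              ⨅ (B : Set X) (_ : MeasurableSet B) (_ : B ⊆ A) (_ : ω A / 2 ≤ ω B),
                ω A ^ (1/p - 1) * ∫⁻ x in B, (‖f x‖₊ : ℝ≥0∞) ∂ω) ≤
            C * ⨆ (l : ℝ≥0∞) (_ : 0 < l), l * ω {x | l < (‖f x‖₊ : ℝ≥0∞)} ^ (1/p)) := by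
  refine ⟨2 ^ ((2:ℝ)/p), ?_, ?_, ?_⟩
  · calc (1:ℝ≥0∞) = 2 ^ (0:ℝ) := ENNReal.rpow_zero.symm
      _ ≤ 2 ^ ((2:ℝ)/p) := ENNReal.rpow_le_rpow_of_exponent_le one_le_two (by positivity)
  · exact ENNReal.rpow_ne_top_of_nonneg (by positivity) (by norm_num)
  · intro Y _ ω f hf hW
    have h2C : (2:ℝ≥0∞) ≤ 2 ^ ((2:ℝ)/p) := by
      have h1p : (1:ℝ) ≤ 1/p := one_le_one_div hp0 hp1
      have h2 : (2:ℝ)/p = 2*(1/p) := by ring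
      calc (2:ℝ≥0∞) = 2 ^ (1:ℝ) := (ENNReal.rpow_one 2).symm
        _ ≤ 2 ^ ((2:ℝ)/p) := ENNReal.rpow_le_rpow_of_exponent_le one_le_two (by
            rw [h2]; linarith)
    refine ⟨?_, aux_upper ω f hf p hp0 hp1 hW⟩
    refine le_trans
      (aux_lower ω (fun x => (‖f x‖₊ : ℝ≥0∞)) hf.nnnorm.coe_nnreal_ennreal p hp0 hW) ?_
    exact mul_le_mul_left h2C _
end

section
/- Let (X, μ, ω) be a σ-finite setting and let S be a size satisfying the support-splitting inequality S(f)(A) ≤ K[S(f 1_B)(A) + S(f 1_{B^c})(A)] with constant K ≥ 1. Fix r ∈ (0,∞) and define S_r(f)(A) = (S(|f|^r)(A))^{1/r}. Let ρ > 0, δ ∈ [0,1], f measurable, and Ω measurable with ‖f·1_{Ω^c}‖_{L^∞_μ(S_r)} ≤ K^{-1/r}(1 − δ^r)^{1/r}·ρ. Then μ(S_r(f) > ρ) ≤ μ(S_r(f·1_Ω) > K^{-1/r}·δ·ρ). -/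
open MeasureTheory ENNReal Set Filter

variable {X : Type*} [MeasurableSpace X]

/-- super level measure comparison lemma for `S_r` under support splitting. -/
theorem stmt5 {X : Type*} [MeasurableSpace X] (μ : MeasureTheory.OuterMeasure X)
    (ω : MeasureTheory.Measure X) (hset : SigmaFiniteSetting μ ω)
    (𝒜 : Set (Set X)) (S : (X → ℝ≥0∞) → Set X → ℝ≥0∞)
    (hmono : ∀ f g : X → ℝ≥0∞, ∀ A ∈ 𝒜, (∀ᵐ x ∂ω, f x ≤ g x) → S f A ≤ S g A)
    (K : ℝ≥0∞) (hK : 1 ≤ K) (hKtop : K ≠ ∞)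
    (hsplit : ∀ (f : X → ℝ≥0∞), ∀ A ∈ 𝒜, ∀ B : Set X, MeasurableSet B →
      S f A ≤ K * (S (B.indicator f) A + S (Bᶜ.indicator f) A))
    (r : ℝ) (hr : 0 < r) (ρ : ℝ≥0∞) (hρ0 : 0 < ρ) (hρtop : ρ ≠ ∞)
    (δ : ℝ≥0∞) (hδ : δ ≤ 1)
    (f : X → ℝ≥0∞) (Ω : Set X) (hΩ : MeasurableSet Ω)
    (hbound : outLinf 𝒜 (sizeR S r) (Ωᶜ.indicator f) ≤
      K ^ (-(1/r)) * (1 - δ ^ r) ^ (1/r) * ρ) :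
    slm μ 𝒜 (sizeR S r) f ρ ≤
      slm μ 𝒜 (sizeR S r) (Ω.indicator f) (K ^ (-(1/r)) * δ * ρ) := by
  have hr' : r ≠ 0 := hr.ne'
  have hK0 : K ≠ 0 := fun h => by simp [h] at hK
  -- indicator commutes with rpow
  have hind : ∀ (B : Set X) (g : X → ℝ≥0∞),
      (fun x => (B.indicator g x) ^ r) = B.indicator (fun x => g x ^ r) := by
    intro B g
    funext x
    by_cases hx : x ∈ B <;> simp [Set.indicator, hx, ENNReal.zero_rpow_of_pos hr]
  -- (a)^{1/r} ≤ b implies a ≤ b^r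
  have hpow : ∀ a b : ℝ≥0∞, a ^ (1/r) ≤ b → a ≤ b ^ r := by
    intro a b h
    have := ENNReal.rpow_le_rpow h hr.le
    rwa [← ENNReal.rpow_mul, one_div, inv_mul_cancel₀ hr', ENNReal.rpow_one] at this
  refine le_iInf fun E => le_iInf fun hE => le_iInf fun hcond => ?_
  refine iInf_le_of_le E (iInf_le_of_le hE (iInf_le_of_le ?_ le_rfl))
  refine iSup₂_le fun A hA => ?_
  -- bound S ((Eᶜ.indicator f)^r) A by ρ^r
  have key : S (fun x => (Eᶜ.indicator f x) ^ r) A ≤ ρ ^ r := by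
    rw [hind]
    calc S (Eᶜ.indicator fun x => f x ^ r) A
        ≤ K * (S (Ω.indicator (Eᶜ.indicator fun x => f x ^ r)) A
            + S (Ωᶜ.indicator (Eᶜ.indicator fun x => f x ^ r)) A) :=
          hsplit _ A hA Ω hΩ
      _ ≤ K * ((K ^ (-(1/r)) * δ * ρ) ^ r
            + (K ^ (-(1/r)) * (1 - δ ^ r) ^ (1/r) * ρ) ^ r) := by
          gcongr
          · -- Ω part
            have h1 : Ω.indicator (Eᶜ.indicator fun x => f x ^ r)
                = fun x => (Eᶜ.indicator (Ω.indicator f) x) ^ r := by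
              rw [hind]
              funext x
              by_cases hx : x ∈ Ω <;> by_cases hx' : x ∈ Eᶜ <;>
                simp [Set.indicator, hx, hx', ENNReal.zero_rpow_of_pos hr]
            rw [h1]
            refine hpow _ _ ?_
            exact le_trans (le_iSup₂ (f := fun A _ => sizeR S r
              (Eᶜ.indicator (Ω.indicator f)) A) A hA) hcond
          · -- Ωᶜ part
            refine le_trans (hmono _ (fun x => (Ωᶜ.indicator f x) ^ r) A hA
              (Filter.Eventually.of_forall fun x => ?_)) ?_
            · rw [show Ωᶜ.indicator f x ^ r = Ωᶜ.indicator (fun x => f x ^ r) x from congrFun (hind Ωᶜ f) x]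
              by_cases hx : x ∈ Ωᶜ <;> by_cases hx' : x ∈ Eᶜ <;>
                simp [Set.indicator, hx, hx', ENNReal.zero_rpow_of_pos hr]
            · refine hpow _ _ ?_
              exact le_trans (le_iSup₂ (f := fun A _ => sizeR S r
                (Ωᶜ.indicator f) A) A hA) hbound
      _ = ρ ^ r := by
          have hKr : (K ^ (-(1/r))) ^ r = K⁻¹ := by
            rw [← ENNReal.rpow_mul, neg_mul, one_div, inv_mul_cancel₀ hr',
              ENNReal.rpow_neg_one]
          have hδr : ((1 - δ ^ r) ^ (1/r)) ^ r = 1 - δ ^ r := by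
            rw [← ENNReal.rpow_mul, one_div, inv_mul_cancel₀ hr', ENNReal.rpow_one]
          rw [ENNReal.mul_rpow_of_nonneg _ _ hr.le, ENNReal.mul_rpow_of_nonneg _ _ hr.le,
            ENNReal.mul_rpow_of_nonneg _ _ hr.le, ENNReal.mul_rpow_of_nonneg _ _ hr.le,
            hKr, hδr]
          have hδ1 : δ ^ r ≤ 1 := ENNReal.rpow_le_one hδ hr.le
          calc K * (K⁻¹ * δ ^ r * ρ ^ r + K⁻¹ * (1 - δ ^ r) * ρ ^ r)
              = (K * K⁻¹) * ((δ ^ r + (1 - δ ^ r)) * ρ ^ r) := by ring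
            _ = ρ ^ r := by
                rw [ENNReal.mul_inv_cancel hK0 hKtop, add_tsub_cancel_of_le hδ1,
                  one_mul, one_mul]
  calc sizeR S r (Eᶜ.indicator f) A = (S (fun x => (Eᶜ.indicator f x) ^ r) A) ^ (1/r) := rfl
    _ ≤ (ρ ^ r) ^ (1/r) := ENNReal.rpow_le_rpow key (by positivity)
    _ = ρ := by rw [← ENNReal.rpow_mul, mul_one_div_cancel hr', ENNReal.rpow_one]
end

section
/- Let (X, μ, ω) be a σ-finite setting, r ∈ (0,∞), and f ∈ L^∞_μ(ℓ^r_ω). Suppose A is a measurable set with 0 < μ(A) < ∞ and ℓ^r_ω(f)(A) ≥ ρ for some ρ > 0. Then for every λ ∈ (0, ρ), one has μ(A) ≤ (‖f‖^r_{L^∞_μ(ℓ^r_ω)} / (ρ^r − λ^r)) · μ(ℓ^r_ω(f) > λ). -/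
open MeasureTheory ENNReal Set Filter

variable {X : Type*} [MeasurableSpace X]

lemma integral_le_of_ellr_le (μ : MeasureTheory.OuterMeasure X) (ω : MeasureTheory.Measure X)
    {r : ℝ} (hr : 0 < r) (f : X → ℝ≥0∞) {B : Set X}
    (h0 : μ B ≠ 0) (ht : μ B ≠ ∞) {c : ℝ≥0∞} (h : ellr μ ω r f B ≤ c) :
    ∫⁻ x in B, f x ^ r ∂ω ≤ c ^ r * μ B := by
  set I := ∫⁻ x in B, f x ^ r ∂ω with hI
  have key : I ^ (1/r) ≤ c * μ B ^ (1/r) := by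
    have h1 : μ B ^ (1/r) * (μ B ^ (-(1/r)) * I ^ (1/r)) ≤ μ B ^ (1/r) * c :=
      mul_le_mul_right h _
    calc I ^ (1/r) = μ B ^ (1/r) * (μ B ^ (-(1/r)) * I ^ (1/r)) := by
          rw [← mul_assoc, ← ENNReal.rpow_add _ _ h0 ht]
          simp
      _ ≤ μ B ^ (1/r) * c := h1
      _ = c * μ B ^ (1/r) := mul_comm _ _
  calc I = (I ^ (1/r)) ^ r := by
        rw [← ENNReal.rpow_mul, one_div, inv_mul_cancel₀ hr.ne', ENNReal.rpow_one]
    _ ≤ (c * μ B ^ (1/r)) ^ r := ENNReal.rpow_le_rpow key hr.le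
    _ = c ^ r * μ B := by
        rw [ENNReal.mul_rpow_of_nonneg _ _ hr.le, ← ENNReal.rpow_mul, one_div,
          inv_mul_cancel₀ hr.ne', ENNReal.rpow_one]

lemma le_integral_of_le_ellr (μ : MeasureTheory.OuterMeasure X) (ω : MeasureTheory.Measure X)
    {r : ℝ} (hr : 0 < r) (f : X → ℝ≥0∞) {B : Set X}
    (h0 : μ B ≠ 0) (ht : μ B ≠ ∞) {c : ℝ≥0∞} (h : c ≤ ellr μ ω r f B) :
    c ^ r * μ B ≤ ∫⁻ x in B, f x ^ r ∂ω := by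
  set I := ∫⁻ x in B, f x ^ r ∂ω with hI
  have key : c * μ B ^ (1/r) ≤ I ^ (1/r) := by
    have h1 : μ B ^ (1/r) * c ≤ μ B ^ (1/r) * (μ B ^ (-(1/r)) * I ^ (1/r)) :=
      mul_le_mul_right h _
    calc c * μ B ^ (1/r) = μ B ^ (1/r) * c := mul_comm _ _
      _ ≤ μ B ^ (1/r) * (μ B ^ (-(1/r)) * I ^ (1/r)) := h1
      _ = I ^ (1/r) := by
          rw [← mul_assoc, ← ENNReal.rpow_add _ _ h0 ht]
          simp
  calc c ^ r * μ B = (c * μ B ^ (1/r)) ^ r := by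
        rw [ENNReal.mul_rpow_of_nonneg _ _ hr.le, ← ENNReal.rpow_mul, one_div,
          inv_mul_cancel₀ hr.ne', ENNReal.rpow_one]
    _ ≤ (I ^ (1/r)) ^ r := ENNReal.rpow_le_rpow key hr.le
    _ = I := by
        rw [← ENNReal.rpow_mul, one_div, inv_mul_cancel₀ hr.ne', ENNReal.rpow_one]

lemma key_estimate (μ : MeasureTheory.OuterMeasure X) (ω : MeasureTheory.Measure X)
    (hac : ∀ A : Set X, μ A = 0 → ω A = 0)
    {r : ℝ} (hr : 0 < r) (f : X → ℝ≥0∞)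
    {A : Set X} (hA : A ∈ goodSets μ)
    {ρ : ℝ≥0∞} (hAρ : ρ ≤ ellr μ ω r f A)
    {l : ℝ≥0∞} {E : Set X} (hE : MeasurableSet E)
    (hle : outLinf (goodSets μ) (ellr μ ω r) (Eᶜ.indicator f) ≤ l) :
    ρ ^ r * μ A ≤ (outLinf (goodSets μ) (ellr μ ω r) f) ^ r * μ E + l ^ r * μ A := by
  obtain ⟨hAm, hA0, hAt⟩ := hA
  set N := outLinf (goodSets μ) (ellr μ ω r) f with hN
  -- lower bound
  have h1 : ρ ^ r * μ A ≤ ∫⁻ x in A, f x ^ r ∂ω :=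
    le_integral_of_le_ellr μ ω hr f hA0 hAt hAρ
  -- split
  have hsplit : (∫⁻ x in A, f x ^ r ∂ω)
      = (∫⁻ x in A ∩ E, f x ^ r ∂ω) + ∫⁻ x in A \ E, f x ^ r ∂ω :=
    (lintegral_inter_add_diff _ _ hE).symm
  -- first piece
  have h2 : (∫⁻ x in A ∩ E, f x ^ r ∂ω) ≤ N ^ r * μ E := by
    by_cases h0 : μ (A ∩ E) = 0
    · have : ω (A ∩ E) = 0 := hac _ h0
      rw [setLIntegral_measure_zero _ _ this]
      exact zero_le
    · have hgood : A ∩ E ∈ goodSets μ :=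
        ⟨hAm.inter hE, h0, fun h => hAt (top_le_iff.mp (h ▸ μ.mono inter_subset_left))⟩
      have hle' : ellr μ ω r f (A ∩ E) ≤ N := le_biSup _ hgood
      calc (∫⁻ x in A ∩ E, f x ^ r ∂ω) ≤ N ^ r * μ (A ∩ E) :=
            integral_le_of_ellr_le μ ω hr f h0 hgood.2.2 hle'
        _ ≤ N ^ r * μ E := mul_le_mul_right (μ.mono inter_subset_right) _
  -- second piece
  have h3 : (∫⁻ x in A \ E, f x ^ r ∂ω) ≤ l ^ r * μ A := by
    have hlA : ellr μ ω r (Eᶜ.indicator f) A ≤ l :=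
      le_trans (le_biSup (fun A => ellr μ ω r (Eᶜ.indicator f) A)
        (show A ∈ goodSets μ from ⟨hAm, hA0, hAt⟩)) hle
    have hint : (∫⁻ x in A, (Eᶜ.indicator f) x ^ r ∂ω) ≤ l ^ r * μ A :=
      integral_le_of_ellr_le μ ω hr _ hA0 hAt hlA
    have heq : (∫⁻ x in A, (Eᶜ.indicator f) x ^ r ∂ω)
        = ∫⁻ x in A \ E, f x ^ r ∂ω := by
      have hpt : ∀ x, (Eᶜ.indicator f) x ^ r = Eᶜ.indicator (fun x => f x ^ r) x := by
        intro x
        by_cases hx : x ∈ Eᶜ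
        · simp [Set.indicator_of_mem hx]
        · simp [Set.indicator_of_notMem hx, ENNReal.zero_rpow_of_pos hr]
      rw [lintegral_congr hpt, lintegral_indicator hE.compl,
        Measure.restrict_restrict hE.compl, Set.inter_comm, ← Set.diff_eq]
    rw [heq] at hint
    exact hint
  calc ρ ^ r * μ A ≤ ∫⁻ x in A, f x ^ r ∂ω := h1
    _ = (∫⁻ x in A ∩ E, f x ^ r ∂ω) + ∫⁻ x in A \ E, f x ^ r ∂ω := hsplit
    _ ≤ N ^ r * μ E + l ^ r * μ A := add_le_add h2 h3

/-- Lemma comparing `μ(A)` with the super level measure for `ℓ^r_ω`. -/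
theorem stmt6 {X : Type*} [MeasurableSpace X] (μ : MeasureTheory.OuterMeasure X)
    (ω : MeasureTheory.Measure X) (hset : SigmaFiniteSetting μ ω)
    (r : ℝ) (hr : 0 < r) (f : X → ℝ≥0∞)
    (hf : outLinf (goodSets μ) (ellr μ ω r) f ≠ ∞)
    (A : Set X) (hA : A ∈ goodSets μ)
    (ρ : ℝ≥0∞) (hρ0 : 0 < ρ) (hρtop : ρ ≠ ∞) (hAρ : ρ ≤ ellr μ ω r f A)
    (l : ℝ≥0∞) (hl0 : 0 < l) (hlρ : l < ρ) :
    μ A ≤ (outLinf (goodSets μ) (ellr μ ω r) f) ^ r / (ρ ^ r - l ^ r) *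
      slm μ (goodSets μ) (ellr μ ω r) f l := by
  set N := outLinf (goodSets μ) (ellr μ ω r) f with hN
  have hNρ : ρ ≤ N := le_trans hAρ (le_biSup _ hA)
  have hNr0 : N ^ r ≠ 0 := by
    refine fun h => absurd (le_trans hNρ (le_of_eq ?_)) (not_le.mpr hρ0)
    exact (ENNReal.rpow_eq_zero_iff.mp h).elim
      (fun h => h.1) (fun h => absurd hr (not_lt.mpr h.2.le))
  have hNrt : N ^ r ≠ ∞ := ENNReal.rpow_ne_top_of_nonneg hr.le hf
  have hD0 : ρ ^ r - l ^ r ≠ 0 := by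
    rw [← pos_iff_ne_zero, tsub_pos_iff_lt]
    exact ENNReal.rpow_lt_rpow hlρ hr
  have hDt : ρ ^ r - l ^ r ≠ ∞ := by
    refine ne_top_of_le_ne_top ?_ tsub_le_self
    simp [ENNReal.rpow_eq_top_iff, hρtop, not_lt.mpr hr.le]
  set C := N ^ r / (ρ ^ r - l ^ r) with hC
  have hC0 : C ≠ 0 := by
    simp [hC, ENNReal.div_eq_zero_iff, hNr0, hDt]
  have hCt : C ≠ ∞ := by
    simp [hC, ENNReal.div_eq_top, hNr0, hNrt, hD0]
  rw [mul_comm, ← ENNReal.div_le_iff_le_mul (Or.inl hC0) (Or.inl hCt)]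
  refine le_iInf fun E => le_iInf fun hE => le_iInf fun hle => ?_
  rw [ENNReal.div_le_iff_le_mul (Or.inl hC0) (Or.inl hCt), mul_comm]
  -- goal: μ A ≤ C * μ E
  have key := key_estimate μ ω hset.ac hr f hA hAρ hE hle
  have hsub : (ρ ^ r - l ^ r) * μ A ≤ N ^ r * μ E := by
    rw [ENNReal.sub_mul (fun _ _ => hA.2.2)]
    exact tsub_le_iff_right.mpr key
  rw [hC, div_eq_mul_inv, mul_right_comm, ← div_eq_mul_inv,
    ENNReal.le_div_iff_mul_le (Or.inl hD0) (Or.inl hDt), mul_comm]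
  exact hsub
end

section
/- Let (X, μ, ω) be a σ-finite setting, r ∈ (0,∞), p ∈ (0,∞], and f ∈ L^{p,∞}_μ(ℓ^r_ω) with f not ω-a.e. zero. There exists a constant C = C(p, r) such that ‖f‖_{L^∞_μ(ℓ^r_ω)} ≤ C · sup{μ(A)^{-1}·‖f·1_A‖_{L^{1,∞}_μ(ℓ^r_ω)} : A measurable, 0 < μ(A) < ∞}. -/
open MeasureTheory ENNReal Set Filter

variable {X : Type*} [MeasurableSpace X]

section Stmt13Aux

variable {μ : MeasureTheory.OuterMeasure X} {ω : MeasureTheory.Measure X}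

private lemma aux_null_int (hac : ∀ A : Set X, μ A = 0 → ω A = 0)
    {g : X → ℝ≥0∞} {A : Set X} (h : μ A = 0) : ∫⁻ x in A, g x ∂ω = 0 := by
  rw [Measure.restrict_eq_zero.mpr (hac A h), lintegral_zero_measure]

private lemma aux_rpow_ne_zero {a : ℝ≥0∞} {s : ℝ} (ha0 : a ≠ 0) (hat : a ≠ ∞) :
    a ^ s ≠ 0 := by
  intro h
  rcases ENNReal.rpow_eq_zero_iff.mp h with ⟨h1, _⟩ | ⟨h1, _⟩
  · exact ha0 h1
  · exact hat h1

/-- The descent step: if a good set `A` is "heavy" (`2 l^r μ A ≤ ∫_A f^r`) and the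
super level measure of `1_A f` at level `l` is smaller than `μ A / 4`, then there is a
good heavy subset `B` of at most a quarter of the measure carrying almost all of the
integral. -/
private lemma aux_step (hac : ∀ A : Set X, μ A = 0 → ω A = 0) {r : ℝ} (hr : 0 < r)
    {f : X → ℝ≥0∞} {l : ℝ≥0∞} (hl0 : l ≠ 0) (hlt : l ≠ ∞) {A : Set X}
    (hA : A ∈ goodSets μ)
    (heavy : 2 * l ^ r * μ A ≤ ∫⁻ x in A, f x ^ r ∂ω)
    (hslm : slm μ (goodSets μ) (ellr μ ω r) (A.indicator f) l < μ A / 4) :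
    ∃ B : Set X, (B ∈ goodSets μ ∧ 2 * l ^ r * μ B ≤ ∫⁻ x in B, f x ^ r ∂ω) ∧ B ⊆ A ∧
      μ B ≤ μ A / 4 ∧ (∫⁻ x in A \ B, f x ^ r ∂ω) ≤ l ^ r * μ A := by
  obtain ⟨hAm, hA0, hAt⟩ := hA
  rw [slm, iInf_lt_iff] at hslm
  obtain ⟨E, hslm⟩ := hslm
  rw [iInf_lt_iff] at hslm
  obtain ⟨hEm, hslm⟩ := hslm
  rw [iInf_lt_iff] at hslm
  obtain ⟨hcon, hEμ⟩ := hslm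
  set B := A ∩ E with hBdef
  set D := A \ E with hDdef
  have hDm : MeasurableSet D := hAm.diff hEm
  have hBm : MeasurableSet B := hAm.inter hEm
  have hDsub : D ⊆ A := Set.diff_subset
  have hBsub : B ⊆ A := Set.inter_subset_left
  have hlr0 : l ^ r ≠ 0 := aux_rpow_ne_zero hl0 hlt
  have hlrt : l ^ r ≠ ∞ := ENNReal.rpow_ne_top_of_nonneg hr.le hlt
  -- the integral over `D` is small
  have hD_int : (∫⁻ x in D, f x ^ r ∂ω) ≤ l ^ r * μ D := by
    by_cases hD0 : μ D = 0
    · rw [aux_null_int hac hD0]; exact zero_le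
    · have hDμt : μ D ≠ ∞ := ne_top_of_le_ne_top hAt (μ.mono hDsub)
      have hDgood : D ∈ goodSets μ := ⟨hDm, hD0, hDμt⟩
      have h1 : ellr μ ω r (Eᶜ.indicator (A.indicator f)) D ≤ l := by
        refine le_trans ?_ hcon
        rw [outLinf]
        exact le_iSup₂ (f := fun B (_ : B ∈ goodSets μ) =>
          ellr μ ω r (Eᶜ.indicator (A.indicator f)) B) D hDgood
      have hcong : (∫⁻ x in D, (Eᶜ.indicator (A.indicator f) x) ^ r ∂ω)
          = ∫⁻ x in D, f x ^ r ∂ω := by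
        refine setLIntegral_congr_fun hDm (fun x hx => ?_)
        rw [Set.indicator_of_mem (show x ∈ Eᶜ from hx.2), Set.indicator_of_mem hx.1]
      rw [ellr, hcong] at h1
      set I := ∫⁻ x in D, f x ^ r ∂ω with hIdef
      have ha0 : μ D ^ ((1:ℝ)/r) ≠ 0 := aux_rpow_ne_zero hD0 hDμt
      have hat : μ D ^ ((1:ℝ)/r) ≠ ∞ := ENNReal.rpow_ne_top_of_nonneg (by positivity) hDμt
      have h2 : I ^ ((1:ℝ)/r) ≤ μ D ^ ((1:ℝ)/r) * l := by
        have h3 := mul_le_mul_right h1 (μ D ^ ((1:ℝ)/r))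
        rwa [ENNReal.rpow_neg, ← mul_assoc, ENNReal.mul_inv_cancel ha0 hat, one_mul] at h3
      have h4 := ENNReal.rpow_le_rpow h2 hr.le
      rwa [← ENNReal.rpow_mul, one_div_mul_cancel hr.ne', ENNReal.rpow_one,
        ENNReal.mul_rpow_of_nonneg _ _ hr.le, ← ENNReal.rpow_mul,
        one_div_mul_cancel hr.ne', ENNReal.rpow_one, mul_comm] at h4
  -- splitting of the integral
  have hsplit : (∫⁻ x in A, f x ^ r ∂ω)
      = (∫⁻ x in B, f x ^ r ∂ω) + ∫⁻ x in D, f x ^ r ∂ω := by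
    conv_lhs => rw [← Set.inter_union_diff A E]
    exact lintegral_union hDm (Set.disjoint_sdiff_right.mono_left Set.inter_subset_right)
  have hlrA_t : l ^ r * μ A ≠ ∞ := ENNReal.mul_ne_top hlrt hAt
  -- the integral over `B` is large
  have hBlow : l ^ r * μ A ≤ ∫⁻ x in B, f x ^ r ∂ω := by
    have h5 : l ^ r * μ A + l ^ r * μ A ≤ (∫⁻ x in B, f x ^ r ∂ω) + l ^ r * μ A := by
      calc l ^ r * μ A + l ^ r * μ A = 2 * l ^ r * μ A := by ring
        _ ≤ ∫⁻ x in A, f x ^ r ∂ω := heavy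
        _ = (∫⁻ x in B, f x ^ r ∂ω) + ∫⁻ x in D, f x ^ r ∂ω := hsplit
        _ ≤ (∫⁻ x in B, f x ^ r ∂ω) + l ^ r * μ A :=
            add_le_add_right (hD_int.trans (mul_le_mul_right (μ.mono hDsub) _)) _
    exact ENNReal.le_of_add_le_add_right hlrA_t h5
  have hB0 : μ B ≠ 0 := by
    intro h0
    rw [aux_null_int hac h0, le_zero_iff] at hBlow
    exact (mul_ne_zero hlr0 hA0) hBlow
  have hBμ4 : μ B ≤ μ A / 4 := le_of_lt (lt_of_le_of_lt (μ.mono Set.inter_subset_right) hEμ)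
  have hBgood : B ∈ goodSets μ := ⟨hBm, hB0, ne_top_of_le_ne_top hAt (μ.mono hBsub)⟩
  have h24 : (2:ℝ≥0∞) * 4⁻¹ ≤ 1 := by
    calc (2:ℝ≥0∞) * 4⁻¹ ≤ 4 * 4⁻¹ := mul_le_mul_left (by norm_num) _
      _ = 1 := ENNReal.mul_inv_cancel (by norm_num) (by norm_num)
  have hheavyB : 2 * l ^ r * μ B ≤ ∫⁻ x in B, f x ^ r ∂ω := by
    refine le_trans ?_ hBlow
    calc 2 * l ^ r * μ B ≤ 2 * l ^ r * (μ A / 4) := mul_le_mul_right hBμ4 (2 * l ^ r)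
      _ = l ^ r * μ A * (2 * 4⁻¹) := by rw [div_eq_mul_inv]; ring
      _ ≤ l ^ r * μ A * 1 := mul_le_mul_right h24 _
      _ = l ^ r * μ A := mul_one _
  refine ⟨B, ⟨hBgood, hheavyB⟩, hBsub, hBμ4, ?_⟩
  rw [show A \ B = D from Set.diff_self_inter]
  exact hD_int.trans (mul_le_mul_right (μ.mono hDsub) _)

end Stmt13Aux

section Stmt13Master

variable {μ : MeasureTheory.OuterMeasure X} {ω : MeasureTheory.Measure X}

/-- Key estimate: if a good set `A₀` is heavy at finite positive level `l`, then the
supremum of the normalized weak pairings is at least `l / 4`. -/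
private lemma aux_master (hac : ∀ A : Set X, μ A = 0 → ω A = 0) {r : ℝ} (hr : 0 < r)
    {f : X → ℝ≥0∞} {l : ℝ≥0∞} (hl0 : l ≠ 0) (hlt : l ≠ ∞) {A₀ : Set X}
    (hA₀ : A₀ ∈ goodSets μ)
    (heavy₀ : 2 * l ^ r * μ A₀ ≤ ∫⁻ x in A₀, f x ^ r ∂ω) :
    l ≤ 4 * ⨆ A ∈ goodSets μ, (μ A)⁻¹ *
      outWeak μ (goodSets μ) (ellr μ ω r) 1 (A.indicator f) := by
  classical
  by_contra hcon
  push_neg at hcon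
  set R := ⨆ A ∈ goodSets μ, (μ A)⁻¹ *
      outWeak μ (goodSets μ) (ellr μ ω r) 1 (A.indicator f) with hRdef
  have hlr0 : l ^ r ≠ 0 := aux_rpow_ne_zero hl0 hlt
  have hlrt : l ^ r ≠ ∞ := ENNReal.rpow_ne_top_of_nonneg hr.le hlt
  have hRlt : R < l / 4 := by
    have h1 : (4:ℝ≥0∞)⁻¹ * (4 * R) < 4⁻¹ * l :=
      (ENNReal.mul_lt_mul_iff_right (by norm_num) (by norm_num)).mpr hcon
    rwa [← mul_assoc, ENNReal.inv_mul_cancel (by norm_num) (by norm_num), one_mul,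
      mul_comm, ← div_eq_mul_inv] at h1
  -- every good heavy set has small super level measure at level `l`
  have key : ∀ A, A ∈ goodSets μ → 2 * l ^ r * μ A ≤ (∫⁻ x in A, f x ^ r ∂ω) →
      slm μ (goodSets μ) (ellr μ ω r) (A.indicator f) l < μ A / 4 := by
    intro A hA _
    obtain ⟨hAm, hA0, hAt⟩ := hA
    have h1 : l * slm μ (goodSets μ) (ellr μ ω r) (A.indicator f) l ≤
        outWeak μ (goodSets μ) (ellr μ ω r) 1 (A.indicator f) := by
      rw [outWeak]
      have h0 := le_iSup₂ (f := fun (l' : ℝ≥0∞) (_ : 0 < l') =>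
        l' * (slm μ (goodSets μ) (ellr μ ω r) (A.indicator f) l') ^ (1/(1:ℝ)))
        l (pos_iff_ne_zero.mpr hl0)
      simpa using h0
    have h2 : (μ A)⁻¹ * outWeak μ (goodSets μ) (ellr μ ω r) 1 (A.indicator f) ≤ R := by
      rw [hRdef]
      exact le_iSup₂ (f := fun A (_ : A ∈ goodSets μ) => (μ A)⁻¹ *
        outWeak μ (goodSets μ) (ellr μ ω r) 1 (A.indicator f)) A ⟨hAm, hA0, hAt⟩
    have h3 : outWeak μ (goodSets μ) (ellr μ ω r) 1 (A.indicator f) ≤ μ A * R := by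
      calc outWeak μ (goodSets μ) (ellr μ ω r) 1 (A.indicator f)
          = μ A * ((μ A)⁻¹ * outWeak μ (goodSets μ) (ellr μ ω r) 1 (A.indicator f)) := by
            rw [← mul_assoc, ENNReal.mul_inv_cancel hA0 hAt, one_mul]
        _ ≤ μ A * R := mul_le_mul_right h2 _
    have h4 : l * slm μ (goodSets μ) (ellr μ ω r) (A.indicator f) l < l * (μ A / 4) := by
      calc l * slm μ (goodSets μ) (ellr μ ω r) (A.indicator f) l ≤ μ A * R := h1.trans h3
        _ < μ A * (l / 4) := (ENNReal.mul_lt_mul_iff_right hA0 hAt).mpr hRlt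
        _ = l * (μ A / 4) := by rw [div_eq_mul_inv, div_eq_mul_inv]; ring
    exact (ENNReal.mul_lt_mul_iff_right hl0 hlt).mp h4
  -- iterate the descent step
  have step' : ∀ A, (A ∈ goodSets μ ∧ 2 * l ^ r * μ A ≤ ∫⁻ x in A, f x ^ r ∂ω) →
      ∃ B, (B ∈ goodSets μ ∧ 2 * l ^ r * μ B ≤ ∫⁻ x in B, f x ^ r ∂ω) ∧ B ⊆ A ∧
        μ B ≤ μ A / 4 ∧ (∫⁻ x in A \ B, f x ^ r ∂ω) ≤ l ^ r * μ A :=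
    fun A hA => aux_step hac hr hl0 hlt hA.1 hA.2 (key A hA.1 hA.2)
  choose next hnext hsub hquarter hdiff using step'
  let seq : ℕ → {A : Set X // A ∈ goodSets μ ∧ 2 * l ^ r * μ A ≤ ∫⁻ x in A, f x ^ r ∂ω} :=
    fun n => Nat.rec ⟨A₀, hA₀, heavy₀⟩ (fun _ p => ⟨next p.1 p.2, hnext p.1 p.2⟩) n
  set Aseq : ℕ → Set X := fun n => (seq n).1 with hAseq
  have hseq_succ : ∀ n, Aseq (n + 1) = next (seq n).1 (seq n).2 := fun n => rfl
  have hseq_zero : Aseq 0 = A₀ := rfl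
  have hμn : ∀ n, μ (Aseq n) ≤ 4⁻¹ ^ n * μ A₀ := by
    intro n
    induction n with
    | zero => rw [hseq_zero, pow_zero, one_mul]
    | succ n ih =>
      calc μ (Aseq (n+1)) ≤ μ (Aseq n) / 4 := by rw [hseq_succ]; exact hquarter _ _
        _ ≤ (4⁻¹ ^ n * μ A₀) / 4 := ENNReal.div_le_div_right ih 4
        _ = 4⁻¹ ^ (n+1) * μ A₀ := by rw [div_eq_mul_inv, pow_succ]; ring
  have hdiffn : ∀ n, (∫⁻ x in Aseq n \ Aseq (n+1), f x ^ r ∂ω)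
      ≤ l ^ r * μ A₀ * (4⁻¹:ℝ≥0∞) ^ n := by
    intro n
    calc (∫⁻ x in Aseq n \ Aseq (n+1), f x ^ r ∂ω) ≤ l ^ r * μ (Aseq n) := by
          rw [hseq_succ]; exact hdiff _ _
      _ ≤ l ^ r * (4⁻¹ ^ n * μ A₀) := mul_le_mul_right (hμn n) _
      _ = l ^ r * μ A₀ * (4⁻¹:ℝ≥0∞) ^ n := by ring
  set N := ⋂ n, Aseq n with hNdef
  have hNμ : μ N = 0 := by
    have hb : ∀ n, μ N ≤ 4⁻¹ ^ n * μ A₀ :=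
      fun n => (μ.mono (Set.iInter_subset _ n)).trans (hμn n)
    have htend : Filter.Tendsto (fun n : ℕ => (4⁻¹:ℝ≥0∞) ^ n * μ A₀)
        Filter.atTop (nhds 0) := by
      have h0 := ENNReal.Tendsto.mul_const
        (ENNReal.tendsto_pow_atTop_nhds_zero_of_lt_one (by norm_num : (4⁻¹:ℝ≥0∞) < 1))
        (Or.inr hA₀.2.2)
      rwa [zero_mul] at h0
    exact le_zero_iff.mp (ge_of_tendsto htend (Filter.Eventually.of_forall hb))
  have hNint : (∫⁻ x in N, f x ^ r ∂ω) = 0 := aux_null_int hac hNμ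
  have cover : A₀ ⊆ N ∪ ⋃ n, (Aseq n \ Aseq (n+1)) := by
    intro x hx
    by_cases hall : ∀ n, x ∈ Aseq n
    · exact Or.inl (Set.mem_iInter.mpr hall)
    · push_neg at hall
      have hk := Nat.find_spec hall
      have hk0 : Nat.find hall ≠ 0 := by
        intro h
        rw [h, hseq_zero] at hk
        exact hk hx
      obtain ⟨m, hm⟩ := Nat.exists_eq_succ_of_ne_zero hk0
      refine Or.inr (Set.mem_iUnion.mpr ⟨m, ?_, ?_⟩)
      · by_contra hxm
        exact Nat.find_min hall (by omega) hxm
      · rw [hm] at hk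
        exact hk
  have hμA₀lr0 : l ^ r * μ A₀ ≠ 0 := mul_ne_zero hlr0 hA₀.2.1
  have hμA₀lrt : l ^ r * μ A₀ ≠ ∞ := ENNReal.mul_ne_top hlrt hA₀.2.2
  have hsum : (∫⁻ x in A₀, f x ^ r ∂ω) ≤ l ^ r * μ A₀ * ∑' n : ℕ, (4⁻¹ : ℝ≥0∞) ^ n := by
    calc (∫⁻ x in A₀, f x ^ r ∂ω)
        ≤ ∫⁻ x in N ∪ ⋃ n, (Aseq n \ Aseq (n+1)), f x ^ r ∂ω := lintegral_mono_set cover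
      _ ≤ (∫⁻ x in N, f x ^ r ∂ω) + ∫⁻ x in ⋃ n, (Aseq n \ Aseq (n+1)), f x ^ r ∂ω :=
          lintegral_union_le _ _ _
      _ ≤ 0 + ∑' n, ∫⁻ x in Aseq n \ Aseq (n+1), f x ^ r ∂ω := by
          rw [hNint]; exact add_le_add_right (lintegral_iUnion_le _ _) 0
      _ ≤ ∑' n, l ^ r * μ A₀ * (4⁻¹:ℝ≥0∞) ^ n := by
          rw [zero_add]; exact ENNReal.tsum_le_tsum hdiffn
      _ = l ^ r * μ A₀ * ∑' n : ℕ, (4⁻¹ : ℝ≥0∞) ^ n := ENNReal.tsum_mul_left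
  have hgeo : (∑' n : ℕ, (4⁻¹ : ℝ≥0∞) ^ n) < 2 := by
    rw [ENNReal.tsum_geometric]
    have h1 : (1:ℝ≥0∞) - 4⁻¹ = 3/4 := by
      rw [(one_div (4:ℝ≥0∞)).symm]
      refine ENNReal.sub_eq_of_eq_add (by norm_num) ?_
      rw [ENNReal.div_add_div_same, show (3:ℝ≥0∞)+1 = 4 by norm_num,
        ENNReal.div_self (by norm_num) (by norm_num)]
    rw [h1, ENNReal.inv_div (Or.inr (by norm_num)) (Or.inr (by norm_num)),
      ENNReal.div_lt_iff (Or.inl (by norm_num)) (Or.inl (by norm_num))]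
    norm_num
  have hlt' : (∫⁻ x in A₀, f x ^ r ∂ω) < 2 * l ^ r * μ A₀ := by
    calc (∫⁻ x in A₀, f x ^ r ∂ω) ≤ l ^ r * μ A₀ * ∑' n : ℕ, (4⁻¹ : ℝ≥0∞) ^ n := hsum
      _ < l ^ r * μ A₀ * 2 := (ENNReal.mul_lt_mul_iff_right hμA₀lr0 hμA₀lrt).mpr hgeo
      _ = 2 * l ^ r * μ A₀ := by ring
  exact absurd heavy₀ (not_le.mpr hlt')

end Stmt13Master

/-- the outer `L^∞_μ(ℓ^r_ω)` norm is dominated by the supremum of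
normalized `L^{1,∞}_μ(ℓ^r_ω)` pairings. -/
theorem stmt13 (p : ℝ≥0∞) (hp : 0 < p) (r : ℝ) (hr : 0 < r) :
    ∃ C : ℝ≥0∞, 1 ≤ C ∧ C ≠ ∞ ∧
      ∀ (X : Type) [MeasurableSpace X] (μ : MeasureTheory.OuterMeasure X)
        (ω : MeasureTheory.Measure X), SigmaFiniteSetting μ ω →
        ∀ f : X → ℝ≥0∞,
          outLpq μ (goodSets μ) (ellr μ ω r) p ∞ f ≠ ∞ →
          ¬ (f =ᵐ[ω] 0) →
          outLinf (goodSets μ) (ellr μ ω r) f ≤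
            C * ⨆ A ∈ goodSets μ, (μ A)⁻¹ *
              outWeak μ (goodSets μ) (ellr μ ω r) 1 (A.indicator f) := by
  have hrinv : (0:ℝ) ≤ 1 / r := by positivity
  refine ⟨(2:ℝ≥0∞) ^ ((1:ℝ)/r) * 4, ?_, ?_, ?_⟩
  · have h2 : (1:ℝ≥0∞) ≤ 2 ^ ((1:ℝ)/r) := by
      have := ENNReal.rpow_le_rpow_of_exponent_le (one_le_two (α := ℝ≥0∞)) hrinv
      rwa [ENNReal.rpow_zero] at this
    calc (1:ℝ≥0∞) = 1 * 1 := (one_mul 1).symm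
      _ ≤ 2 ^ ((1:ℝ)/r) * 4 := mul_le_mul' h2 (by norm_num)
  · exact ENNReal.mul_ne_top (ENNReal.rpow_ne_top_of_nonneg hrinv (by norm_num)) (by norm_num)
  · intro Y _ μ ω hsett f _ _
    set R := ⨆ A ∈ goodSets μ, (μ A)⁻¹ *
      outWeak μ (goodSets μ) (ellr μ ω r) 1 (A.indicator f) with hRdef
    have hC0 : ((2:ℝ≥0∞) ^ ((1:ℝ)/r) * 4) ≠ 0 :=
      mul_ne_zero (aux_rpow_ne_zero (by norm_num) (by norm_num)) (by norm_num)
    rw [outLinf]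
    refine iSup₂_le fun A hA => ?_
    obtain ⟨hAm, hA0, hAt⟩ := hA
    rw [ellr]
    set I := ∫⁻ x in A, f x ^ r ∂ω with hIdef
    rcases eq_or_ne I 0 with hI0 | hI0
    · rw [hI0, ENNReal.zero_rpow_of_pos (by positivity), mul_zero]
      exact zero_le
    rcases eq_or_ne I ∞ with hIt | hIt
    · -- infinite integral: the right-hand side is infinite
      have hRtop : R = ∞ := by
        by_contra hRt
        have h4R : (4:ℝ≥0∞) * R ≠ ∞ := ENNReal.mul_ne_top (by norm_num) hRt
        set l := 4 * R + 1 with hldef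
        have hl0 : l ≠ 0 := by simp [hldef]
        have hlt : l ≠ ∞ := by
          rw [hldef]
          exact ENNReal.add_ne_top.mpr ⟨h4R, by norm_num⟩
        have heavy : 2 * l ^ r * μ A ≤ I := by rw [hIt]; exact le_top
        have hm := aux_master hsett.ac hr hl0 hlt ⟨hAm, hA0, hAt⟩ heavy
        rw [← hRdef] at hm
        exact absurd hm (not_le.mpr (ENNReal.lt_add_right h4R one_ne_zero))
      rw [hRtop, ENNReal.mul_top hC0]
      exact le_top
    · -- main case: finite positive integral
      have h2A0 : (2 * μ A) ≠ 0 := mul_ne_zero (by norm_num) hA0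
      have h2At : (2 * μ A) ≠ ∞ := ENNReal.mul_ne_top (by norm_num) hAt
      set l := I ^ ((1:ℝ)/r) * (2 * μ A) ^ (-((1:ℝ)/r)) with hldef
      have hb0 : (2 * μ A) ^ ((1:ℝ)/r) ≠ 0 := aux_rpow_ne_zero h2A0 h2At
      have hbt : (2 * μ A) ^ ((1:ℝ)/r) ≠ ∞ := ENNReal.rpow_ne_top_of_nonneg hrinv h2At
      have hl0 : l ≠ 0 := by
        refine mul_ne_zero (aux_rpow_ne_zero hI0 hIt) ?_
        rw [ENNReal.rpow_neg]
        exact ENNReal.inv_ne_zero.mpr hbt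
      have hlt : l ≠ ∞ := by
        refine ENNReal.mul_ne_top (ENNReal.rpow_ne_top_of_nonneg hrinv hIt) ?_
        rw [ENNReal.rpow_neg]
        exact ENNReal.inv_ne_top.mpr hb0
      have hlr : l ^ r = I * (2 * μ A)⁻¹ := by
        rw [hldef, ENNReal.mul_rpow_of_nonneg _ _ hr.le, ← ENNReal.rpow_mul,
          ← ENNReal.rpow_mul, one_div_mul_cancel hr.ne', ENNReal.rpow_one,
          neg_mul, one_div_mul_cancel hr.ne', ENNReal.rpow_neg_one]
      have heavy : 2 * l ^ r * μ A ≤ I := by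
        rw [hlr, show 2 * (I * (2 * μ A)⁻¹) * μ A = I * ((2 * μ A)⁻¹ * (2 * μ A)) by ring,
          ENNReal.inv_mul_cancel h2A0 h2At, mul_one]
      have hm := aux_master hsett.ac hr hl0 hlt ⟨hAm, hA0, hAt⟩ heavy
      rw [← hRdef] at hm
      -- identify the left-hand side with 2^{1/r} * l
      have h20 : (2:ℝ≥0∞) ^ ((1:ℝ)/r) ≠ 0 := aux_rpow_ne_zero (by norm_num) (by norm_num)
      have h2t : (2:ℝ≥0∞) ^ ((1:ℝ)/r) ≠ ∞ :=
        ENNReal.rpow_ne_top_of_nonneg hrinv (by norm_num)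
      have hid : (2:ℝ≥0∞) ^ ((1:ℝ)/r) * l = μ A ^ (-((1:ℝ)/r)) * I ^ ((1:ℝ)/r) := by
        rw [hldef, ENNReal.rpow_neg (2 * μ A), ENNReal.mul_rpow_of_nonneg 2 (μ A) hrinv,
          ENNReal.mul_inv (Or.inl h20) (Or.inl h2t), ENNReal.rpow_neg (μ A),
          show (2:ℝ≥0∞) ^ ((1:ℝ)/r) * (I ^ ((1:ℝ)/r) *
            (((2:ℝ≥0∞) ^ ((1:ℝ)/r))⁻¹ * (μ A ^ ((1:ℝ)/r))⁻¹))
            = (2:ℝ≥0∞) ^ ((1:ℝ)/r) * ((2:ℝ≥0∞) ^ ((1:ℝ)/r))⁻¹ *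
              ((μ A ^ ((1:ℝ)/r))⁻¹ * I ^ ((1:ℝ)/r)) from by ring,
          ENNReal.mul_inv_cancel h20 h2t, one_mul]
      rw [← hid]
      calc (2:ℝ≥0∞) ^ ((1:ℝ)/r) * l ≤ (2:ℝ≥0∞) ^ ((1:ℝ)/r) * (4 * R) := mul_le_mul_right hm _
        _ = (2:ℝ≥0∞) ^ ((1:ℝ)/r) * 4 * R := by rw [mul_assoc]
end
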